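/- Let N ≥ 2. The equivalence relation S_N is ergodic with respect to Lebesgue measure: every Borel set X ⊆ [0,1] that is S_N-saturated satisfies λ(X) = 0 or λ(X) = 1. -/

import Mathlib

/-- A real number is an `N`-adic rational if it equals `k / N^m` for some `k : ℤ`, `m : ℕ`. -/
def IsNAdic (N : ℕ) (x : ℝ) : Prop :=
  ∃ (k : ℤ) (m : ℕ), x = (k : ℝ) / (N : ℝ) ^ m

/-- Membership (as a map of `[0,1]`) in the generalized Thompson group `F(N)`:
`f 0 = 0`, `f 1 = 1`, and there is a finite partition `0 = a 0 < a 1 < ⋯ < a n = 1`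
of `[0,1]` by `N`-adic rationals such that on each piece `[a i, a (i+1)]` the map `f`
is affine with slope an integer power of `N`.  (Such an `f` is automatically an
increasing piecewise-linear homeomorphism of `[0,1]` onto itself, with all
non-differentiability points `N`-adic.) -/
def InFN (N : ℕ) (f : ℝ → ℝ) : Prop :=
  f 0 = 0 ∧ f 1 = 1 ∧
    ∃ (n : ℕ) (a : ℕ → ℝ), 0 < n ∧ a 0 = 0 ∧ a n = 1 ∧
      (∀ i < n, a i < a (i + 1)) ∧
      (∀ i ≤ n, IsNAdic N (a i)) ∧
      (∀ i < n, ∃ q : ℤ, ∀ x ∈ Set.Icc (a i) (a (i + 1)),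
        f x = f (a i) + (N : ℝ) ^ q * (x - a i))

/-- A set `X ⊆ [0,1]` is `S_N`-saturated if for every `x ∈ X` and every `f ∈ F(N)`
differentiable at `x` with `f'(x) = 1`, one has `f(x) ∈ X`. -/
def SNSaturated (N : ℕ) (X : Set ℝ) : Prop :=
  ∀ x ∈ X, ∀ f : ℝ → ℝ, InFN N f → HasDerivAt f 1 x → f x ∈ X

open MeasureTheory Set Filter
open scoped ENNReal

namespace S10

noncomputable def Umap (N s : ℕ) : ℝ → ℝ := fun x =>
  if x ≤ 1 / (N:ℝ)^(s+1) then N * x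
  else if x ≤ 1 - 1/(N:ℝ)^s then x + ((N:ℝ)-1)/(N:ℝ)^(s+1)
  else 1 + (x - 1)/N

noncomputable def Dmap (N s : ℕ) : ℝ → ℝ := fun x =>
  if x ≤ 1 / (N:ℝ)^s then x / N
  else if x ≤ 1 - 1/(N:ℝ)^(s+1) then x - ((N:ℝ)-1)/(N:ℝ)^(s+1)
  else 1 + N * (x - 1)

noncomputable def Upart (N s : ℕ) : ℕ → ℝ := fun i =>
  if i = 0 then 0 else if i = 1 then 1/(N:ℝ)^(s+1) else if i = 2 then 1 - 1/(N:ℝ)^s else 1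

noncomputable def Dpart (N s : ℕ) : ℕ → ℝ := fun i =>
  if i = 0 then 0 else if i = 1 then 1/(N:ℝ)^s else if i = 2 then 1 - 1/(N:ℝ)^(s+1) else 1

variable {N : ℕ}

lemma Upart0 (N s : ℕ) : Upart N s 0 = 0 := rfl
lemma Upart1 (N s : ℕ) : Upart N s 1 = 1/(N:ℝ)^(s+1) := rfl
lemma Upart2 (N s : ℕ) : Upart N s 2 = 1 - 1/(N:ℝ)^s := rfl
lemma Upart3 (N s : ℕ) : Upart N s 3 = 1 := rfl
lemma Dpart0 (N s : ℕ) : Dpart N s 0 = 0 := rfl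
lemma Dpart1 (N s : ℕ) : Dpart N s 1 = 1/(N:ℝ)^s := rfl
lemma Dpart2 (N s : ℕ) : Dpart N s 2 = 1 - 1/(N:ℝ)^(s+1) := rfl
lemma Dpart3 (N s : ℕ) : Dpart N s 3 = 1 := rfl

lemma hR1 (hN : 2 ≤ N) : (1:ℝ) < N := by
  have : (2:ℝ) ≤ N := by exact_mod_cast hN
  linarith

lemma hR0 (hN : 2 ≤ N) : (0:ℝ) < N := lt_trans one_pos (hR1 hN)

lemma hpow_pos (hN : 2 ≤ N) (m : ℕ) : (0:ℝ) < (N:ℝ)^m := pow_pos (hR0 hN) m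

lemma inv_pow_le_half (hN : 2 ≤ N) {s : ℕ} (hs : 1 ≤ s) : 1/(N:ℝ)^s ≤ 1/2 := by
  have h2 : (2:ℝ) ≤ (N:ℝ)^s := by
    calc (2:ℝ) ≤ (N:ℝ) := by exact_mod_cast hN
    _ ≤ (N:ℝ)^s := le_self_pow₀ (le_of_lt (hR1 hN)) (by omega)
  rw [div_le_div_iff₀ (hpow_pos hN s) (by norm_num)]
  linarith

lemma key_ineq (hN : 2 ≤ N) {s : ℕ} (hs : 1 ≤ s) :
    1/(N:ℝ)^(s+1) < 1 - 1/(N:ℝ)^s := by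
  have h1 : 1/(N:ℝ)^(s+1) ≤ 1/2 := inv_pow_le_half hN (by omega)
  have h2 : 1/(N:ℝ)^s ≤ 1/2 := inv_pow_le_half hN hs
  have h3 : 1/(N:ℝ)^(s+1) < 1/(N:ℝ)^s := by
    apply div_lt_div_of_pos_left one_pos (hpow_pos hN s)
    exact pow_lt_pow_right₀ (hR1 hN) (by omega)
  linarith

lemma umap_inFN (hN : 2 ≤ N) {s : ℕ} (hs : 1 ≤ s) : InFN N (Umap N s) := by
  have hp0 : (0:ℝ) < 1/(N:ℝ)^(s+1) := by positivity
  have hpq := key_ineq hN hs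
  have hq0 : (0:ℝ) < 1/(N:ℝ)^s := by positivity
  have hq1 : 1 - 1/(N:ℝ)^s < 1 := by linarith
  have hNne : (N:ℝ) ≠ 0 := ne_of_gt (hR0 hN)
  have hpowne : ∀ m : ℕ, (N:ℝ)^m ≠ 0 := fun m => ne_of_gt (hpow_pos hN m)
  refine ⟨?_, ?_, 3, Upart N s, by norm_num, Upart0 N s, Upart3 N s, ?_, ?_, ?_⟩
  · simp only [Umap, if_pos (le_of_lt hp0)]; ring
  · have h1 : ¬ ((1:ℝ) ≤ 1/(N:ℝ)^(s+1)) := by push_neg; linarith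
    have h2 : ¬ ((1:ℝ) ≤ 1 - 1/(N:ℝ)^s) := by push_neg; exact hq1
    simp only [Umap, if_neg h1, if_neg h2]; ring
  · intro i hi
    interval_cases i
    · rw [Upart0, Upart1]; exact hp0
    · rw [Upart1, Upart2]; exact hpq
    · rw [Upart2, Upart3]; exact hq1
  · intro i hi
    interval_cases i
    · exact ⟨0, 0, by rw [Upart0]; simp⟩
    · exact ⟨1, s+1, by rw [Upart1]; norm_num⟩
    · refine ⟨(N:ℤ)^s - 1, s, ?_⟩
      rw [Upart2]; push_cast; field_simp
    · exact ⟨1, 0, by rw [Upart3]; norm_num⟩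
  · intro i hi
    interval_cases i
    · refine ⟨1, fun x hx => ?_⟩
      rw [Upart0, Upart1] at hx
      obtain ⟨hx0, hx1⟩ := hx
      rw [Upart0]
      simp only [Umap, if_pos hx1, if_pos (le_of_lt hp0)]
      rw [zpow_one]; ring
    · refine ⟨0, fun x hx => ?_⟩
      rw [Upart1, Upart2] at hx
      obtain ⟨hx0, hx1⟩ := hx
      rw [Upart1]
      have hup : Umap N s (1/(N:ℝ)^(s+1)) = (N:ℝ) * (1/(N:ℝ)^(s+1)) := by
        simp only [Umap, if_pos (le_refl _)]
      rw [hup, zpow_zero]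
      rcases le_or_gt x (1/(N:ℝ)^(s+1)) with h | h
      · have hxe : x = 1/(N:ℝ)^(s+1) := le_antisymm h hx0
        simp only [Umap, hxe, if_pos (le_refl _)]; ring
      · simp only [Umap, if_neg (not_le.mpr h), if_pos hx1]
        rw [pow_succ]; field_simp; ring
    · refine ⟨-1, fun x hx => ?_⟩
      rw [Upart2, Upart3] at hx
      obtain ⟨hx0, hx1⟩ := hx
      rw [Upart2]
      have huq : Umap N s (1 - 1/(N:ℝ)^s) = 1 - 1/(N:ℝ)^s + ((N:ℝ)-1)/(N:ℝ)^(s+1) := by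
        simp only [Umap, if_neg (not_le.mpr hpq), if_pos (le_refl _)]
      rw [huq, zpow_neg_one]
      rcases le_or_gt x (1 - 1/(N:ℝ)^s) with h | h
      · have hxe : x = 1 - 1/(N:ℝ)^s := le_antisymm h hx0
        simp only [Umap, hxe, if_neg (not_le.mpr hpq), if_pos (le_refl _)]; ring
      · have hxp : ¬ (x ≤ 1/(N:ℝ)^(s+1)) := not_le.mpr (lt_trans hpq h)
        simp only [Umap, if_neg hxp, if_neg (not_le.mpr h)]
        rw [pow_succ]; field_simp; ring

lemma key_ineq2 (hN : 2 ≤ N) {s : ℕ} (hs : 1 ≤ s) :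
    1/(N:ℝ)^s < 1 - 1/(N:ℝ)^(s+1) := by
  have h1 : 1/(N:ℝ)^(s+1) ≤ 1/2 := inv_pow_le_half hN (by omega)
  have h2 : 1/(N:ℝ)^s ≤ 1/2 := inv_pow_le_half hN hs
  have h3 : 1/(N:ℝ)^(s+1) < 1/(N:ℝ)^s := by
    apply div_lt_div_of_pos_left one_pos (hpow_pos hN s)
    exact pow_lt_pow_right₀ (hR1 hN) (by omega)
  linarith

lemma dmap_inFN (hN : 2 ≤ N) {s : ℕ} (hs : 1 ≤ s) : InFN N (Dmap N s) := by
  have hp0 : (0:ℝ) < 1/(N:ℝ)^s := by positivity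
  have hpq := key_ineq2 hN hs
  have hq0 : (0:ℝ) < 1/(N:ℝ)^(s+1) := by positivity
  have hq1 : 1 - 1/(N:ℝ)^(s+1) < 1 := by linarith
  have hNne : (N:ℝ) ≠ 0 := ne_of_gt (hR0 hN)
  have hpowne : ∀ m : ℕ, (N:ℝ)^m ≠ 0 := fun m => ne_of_gt (hpow_pos hN m)
  refine ⟨?_, ?_, 3, Dpart N s, by norm_num, Dpart0 N s, Dpart3 N s, ?_, ?_, ?_⟩
  · simp only [Dmap, if_pos (le_of_lt hp0)]; ring
  · have h1 : ¬ ((1:ℝ) ≤ 1/(N:ℝ)^s) := by push_neg; linarith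
    have h2 : ¬ ((1:ℝ) ≤ 1 - 1/(N:ℝ)^(s+1)) := by push_neg; exact hq1
    simp only [Dmap, if_neg h1, if_neg h2]; ring
  · intro i hi
    interval_cases i
    · rw [Dpart0, Dpart1]; exact hp0
    · rw [Dpart1, Dpart2]; exact hpq
    · rw [Dpart2, Dpart3]; exact hq1
  · intro i hi
    interval_cases i
    · exact ⟨0, 0, by rw [Dpart0]; simp⟩
    · exact ⟨1, s, by rw [Dpart1]; norm_num⟩
    · refine ⟨(N:ℤ)^(s+1) - 1, s+1, ?_⟩
      rw [Dpart2]; push_cast; field_simp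
    · exact ⟨1, 0, by rw [Dpart3]; norm_num⟩
  · intro i hi
    interval_cases i
    · refine ⟨-1, fun x hx => ?_⟩
      rw [Dpart0, Dpart1] at hx
      obtain ⟨hx0, hx1⟩ := hx
      rw [Dpart0]
      simp only [Dmap, if_pos hx1, if_pos (le_of_lt hp0)]
      rw [zpow_neg_one]
      field_simp; ring
    · refine ⟨0, fun x hx => ?_⟩
      rw [Dpart1, Dpart2] at hx
      obtain ⟨hx0, hx1⟩ := hx
      rw [Dpart1]
      have hup : Dmap N s (1/(N:ℝ)^s) = (1/(N:ℝ)^s) / N := by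
        simp only [Dmap, if_pos (le_refl _)]
      rw [hup, zpow_zero]
      rcases le_or_gt x (1/(N:ℝ)^s) with h | h
      · have hxe : x = 1/(N:ℝ)^s := le_antisymm h hx0
        simp only [Dmap, hxe, if_pos (le_refl _)]; ring
      · simp only [Dmap, if_neg (not_le.mpr h), if_pos hx1]
        rw [pow_succ]; field_simp; ring
    · refine ⟨1, fun x hx => ?_⟩
      rw [Dpart2, Dpart3] at hx
      obtain ⟨hx0, hx1⟩ := hx
      rw [Dpart2]
      have huq : Dmap N s (1 - 1/(N:ℝ)^(s+1)) = 1 - 1/(N:ℝ)^(s+1) - ((N:ℝ)-1)/(N:ℝ)^(s+1) := by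
        simp only [Dmap, if_neg (not_le.mpr hpq), if_pos (le_refl _)]
      rw [huq, zpow_one]
      rcases le_or_gt x (1 - 1/(N:ℝ)^(s+1)) with h | h
      · have hxe : x = 1 - 1/(N:ℝ)^(s+1) := le_antisymm h hx0
        simp only [Dmap, hxe, if_neg (not_le.mpr hpq), if_pos (le_refl _)]; ring
      · have hxp : ¬ (x ≤ 1/(N:ℝ)^s) := not_le.mpr (lt_trans hpq h)
        simp only [Dmap, if_neg hxp, if_neg (not_le.mpr h)]
        rw [pow_succ]; field_simp; ring

lemma up_mem (hN : 2 ≤ N) {s : ℕ} (hs : 1 ≤ s) {X : Set ℝ} (hXsat : SNSaturated N X)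
    {x : ℝ} (hx : x ∈ X) (h1 : 1/(N:ℝ)^(s+1) < x) (h2 : x < 1 - 1/(N:ℝ)^s) :
    x + ((N:ℝ)-1)/(N:ℝ)^(s+1) ∈ X := by
  set δ := ((N:ℝ)-1)/(N:ℝ)^(s+1) with hδ
  have hd : HasDerivAt (fun y : ℝ => y + δ) 1 x := (hasDerivAt_id x).add_const δ
  have heq : (Umap N s) =ᶠ[nhds x] (fun y => y + δ) := by
    filter_upwards [Ioo_mem_nhds h1 h2] with y hy
    simp only [Umap, if_neg (not_le.mpr hy.1), if_pos (le_of_lt hy.2), hδ]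
  have hder : HasDerivAt (Umap N s) 1 x := hd.congr_of_eventuallyEq heq
  have := hXsat x hx (Umap N s) (umap_inFN hN hs) hder
  have hval : Umap N s x = x + δ := by
    simp only [Umap, if_neg (not_le.mpr h1), if_pos (le_of_lt h2), hδ]
  rwa [hval] at this

lemma down_mem (hN : 2 ≤ N) {s : ℕ} (hs : 1 ≤ s) {X : Set ℝ} (hXsat : SNSaturated N X)
    {x : ℝ} (hx : x ∈ X) (h1 : 1/(N:ℝ)^s < x) (h2 : x < 1 - 1/(N:ℝ)^(s+1)) :
    x - ((N:ℝ)-1)/(N:ℝ)^(s+1) ∈ X := by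
  set δ := ((N:ℝ)-1)/(N:ℝ)^(s+1) with hδ
  have hd : HasDerivAt (fun y : ℝ => y - δ) 1 x := (hasDerivAt_id x).sub_const δ
  have heq : (Dmap N s) =ᶠ[nhds x] (fun y => y - δ) := by
    filter_upwards [Ioo_mem_nhds h1 h2] with y hy
    simp only [Dmap, if_neg (not_le.mpr hy.1), if_pos (le_of_lt hy.2), hδ]
  have hder : HasDerivAt (Dmap N s) 1 x := hd.congr_of_eventuallyEq heq
  have := hXsat x hx (Dmap N s) (dmap_inFN hN hs) hder
  have hval : Dmap N s x = x - δ := by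
    simp only [Dmap, if_neg (not_le.mpr h1), if_pos (le_of_lt h2), hδ]
  rwa [hval] at this

section Meas

variable {N : ℕ} {X : Set ℝ}

lemma vol_fin (hX : X ⊆ Icc (0:ℝ) 1) (A : Set ℝ) : volume (X ∩ A) ≠ ⊤ := by
  have h1 : volume (X ∩ A) ≤ volume (Icc (0:ℝ) 1) := measure_mono (inter_subset_left.trans hX)
  rw [Real.volume_Icc] at h1
  exact ne_top_of_le_ne_top ENNReal.ofReal_ne_top h1

lemma vol_le_one (hX : X ⊆ Icc (0:ℝ) 1) : volume X ≤ 1 := by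
  have : volume X ≤ volume (Icc (0:ℝ) 1) := measure_mono hX
  simpa [Real.volume_Icc] using this

lemma shift_vol (δ : ℝ) (A : Set ℝ) : volume ((fun y => y + δ) '' A) = volume A := by
  rw [image_add_right, measure_preimage_add_right]

lemma inv_pow_succ_lt (hN : 2 ≤ N) (s : ℕ) : 1/(N:ℝ)^(s+1) < 1/(N:ℝ)^s :=
  div_lt_div_of_pos_left one_pos (hpow_pos hN s) (pow_lt_pow_right₀ (hR1 hN) (by omega))

lemma step_le_up (hN : 2 ≤ N) {s : ℕ} (hs : 1 ≤ s) (hXsat : SNSaturated N X)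
    {u h : ℝ} (hu : 1/(N:ℝ)^(s+1) ≤ u) (h2 : u + h ≤ 1 - 1/(N:ℝ)^s) :
    volume (X ∩ Ioo u (u+h)) ≤
      volume (X ∩ Ioo (u + ((N:ℝ)-1)/(N:ℝ)^(s+1)) (u + ((N:ℝ)-1)/(N:ℝ)^(s+1) + h)) := by
  set δ := ((N:ℝ)-1)/(N:ℝ)^(s+1) with hδ
  rw [← shift_vol δ (X ∩ Ioo u (u+h))]
  apply measure_mono
  rintro y ⟨x, ⟨hxX, hx1, hx2⟩, rfl⟩
  simp only [mem_inter_iff, mem_Ioo]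
  exact ⟨up_mem hN hs hXsat hxX (lt_of_le_of_lt hu hx1) (by linarith), by linarith, by linarith⟩

lemma step_le_down (hN : 2 ≤ N) {s : ℕ} (hs : 1 ≤ s) (hXsat : SNSaturated N X)
    {u h : ℝ} (hu : 1/(N:ℝ)^s ≤ u) (h2 : u + h ≤ 1 - 1/(N:ℝ)^(s+1)) :
    volume (X ∩ Ioo u (u+h)) ≤
      volume (X ∩ Ioo (u - ((N:ℝ)-1)/(N:ℝ)^(s+1)) (u - ((N:ℝ)-1)/(N:ℝ)^(s+1) + h)) := by
  set δ := ((N:ℝ)-1)/(N:ℝ)^(s+1) with hδ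
  rw [← shift_vol (-δ) (X ∩ Ioo u (u+h))]
  apply measure_mono
  rintro y ⟨x, ⟨hxX, hx1, hx2⟩, rfl⟩
  simp only [mem_inter_iff, mem_Ioo]
  have hm : x - δ ∈ X := down_mem hN hs hXsat hxX (lt_of_le_of_lt hu hx1) (by linarith)
  refine ⟨by rwa [← sub_eq_add_neg], by linarith, by linarith⟩

lemma delta_pos (hN : 2 ≤ N) (s : ℕ) : 0 < ((N:ℝ)-1)/(N:ℝ)^(s+1) :=
  div_pos (by linarith [hR1 hN]) (hpow_pos hN (s+1))

lemma delta_lt (hN : 2 ≤ N) (s : ℕ) : ((N:ℝ)-1)/(N:ℝ)^(s+1) < 1/(N:ℝ)^s := by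
  rw [div_lt_div_iff₀ (hpow_pos hN (s+1)) (hpow_pos hN s), pow_succ]
  have h0 : (0:ℝ) < (N:ℝ)^s := hpow_pos hN s
  nlinarith [hR1 hN]

lemma step_eq (hN : 2 ≤ N) {s : ℕ} (hs : 1 ≤ s) (hXsat : SNSaturated N X)
    {u h : ℝ} (hu : 1/(N:ℝ)^s ≤ u) (hh : 0 ≤ h)
    (h2 : u + ((N:ℝ)-1)/(N:ℝ)^(s+1) + h ≤ 1 - 1/(N:ℝ)^s) :
    volume (X ∩ Ioo u (u+h)) =
      volume (X ∩ Ioo (u + ((N:ℝ)-1)/(N:ℝ)^(s+1)) (u + ((N:ℝ)-1)/(N:ℝ)^(s+1) + h)) := by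
  set δ := ((N:ℝ)-1)/(N:ℝ)^(s+1) with hδ
  have hδ0 : 0 < δ := delta_pos hN s
  have hps : 1/(N:ℝ)^(s+1) < 1/(N:ℝ)^s := inv_pow_succ_lt hN s
  refine le_antisymm ?_ ?_
  · exact step_le_up hN hs hXsat (by linarith) (by linarith)
  · have h3 : (u + δ) + h ≤ 1 - 1/(N:ℝ)^(s+1) := by linarith
    have h4 : 1/(N:ℝ)^s ≤ u + δ := by linarith
    have := step_le_down hN hs hXsat h4 h3
    have he : u + δ - δ = u := by ring
    rwa [he] at this

lemma chain (hN : 2 ≤ N) {s : ℕ} (hs : 1 ≤ s) (hXsat : SNSaturated N X)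
    {u h : ℝ} (hh : 0 ≤ h) (k : ℕ) (hu : 1/(N:ℝ)^s ≤ u)
    (hk : u + k * (((N:ℝ)-1)/(N:ℝ)^(s+1)) + h ≤ 1 - 1/(N:ℝ)^s) :
    volume (X ∩ Ioo u (u+h)) =
      volume (X ∩ Ioo (u + k * (((N:ℝ)-1)/(N:ℝ)^(s+1)))
        (u + k * (((N:ℝ)-1)/(N:ℝ)^(s+1)) + h)) := by
  set δ := ((N:ℝ)-1)/(N:ℝ)^(s+1) with hδ
  have hδ0 : 0 < δ := delta_pos hN s
  induction k with
  | zero => simp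
  | succ k ih =>
    have hk' : u + k * δ + h ≤ 1 - 1/(N:ℝ)^s := by
      have : (k:ℝ) * δ ≤ (k+1) * δ := by nlinarith
      push_cast at hk ⊢
      nlinarith
    rw [ih hk']
    have h4 : 1/(N:ℝ)^s ≤ u + k * δ := by
      have : (0:ℝ) ≤ (k:ℝ) * δ := by positivity
      linarith
    have h5 : (u + k * δ) + δ + h ≤ 1 - 1/(N:ℝ)^s := by push_cast at hk; linarith
    have := step_eq hN hs hXsat h4 hh h5
    have he : u + (k:ℝ) * δ + δ = u + ((k:ℕ)+1 : ℕ) * δ := by push_cast; ring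
    rw [he] at this
    convert this using 4 <;> push_cast <;> ring


lemma lip1 (hX : X ⊆ Icc (0:ℝ) 1) {u v h : ℝ} (huv : u ≤ v) :
    (volume (X ∩ Ioo u (u+h))).toReal ≤ (volume (X ∩ Ioo v (v+h))).toReal + (v - u) := by
  have hsub : X ∩ Ioo u (u+h) ⊆ (X ∩ Ioo v (v+h)) ∪ Ioc u v := by
    rintro x ⟨hxX, hx1, hx2⟩
    rcases le_or_gt x v with hc | hc
    · exact Or.inr ⟨hx1, hc⟩
    · exact Or.inl ⟨hxX, hc, by linarith⟩
  have hle : volume (X ∩ Ioo u (u+h)) ≤ volume (X ∩ Ioo v (v+h)) + volume (Ioc u v) :=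
    le_trans (measure_mono hsub) (measure_union_le _ _)
  have hf1 : volume (X ∩ Ioo v (v+h)) ≠ ⊤ := vol_fin hX _
  have hf2 : volume (Ioc u v) ≠ ⊤ := by rw [Real.volume_Ioc]; exact ENNReal.ofReal_ne_top
  have := ENNReal.toReal_mono (by finiteness) hle
  rwa [ENNReal.toReal_add hf1 hf2, Real.volume_Ioc, ENNReal.toReal_ofReal (by linarith)] at this

lemma lip2 (hX : X ⊆ Icc (0:ℝ) 1) {u v h : ℝ} (huv : u ≤ v) :
    (volume (X ∩ Ioo v (v+h))).toReal ≤ (volume (X ∩ Ioo u (u+h))).toReal + (v - u) := by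
  have hsub : X ∩ Ioo v (v+h) ⊆ (X ∩ Ioo u (u+h)) ∪ Ico (u+h) (v+h) := by
    rintro x ⟨hxX, hx1, hx2⟩
    rcases lt_or_ge x (u+h) with hc | hc
    · exact Or.inl ⟨hxX, by linarith, hc⟩
    · exact Or.inr ⟨hc, hx2⟩
  have hle : volume (X ∩ Ioo v (v+h)) ≤ volume (X ∩ Ioo u (u+h)) + volume (Ico (u+h) (v+h)) :=
    le_trans (measure_mono hsub) (measure_union_le _ _)
  have hf1 : volume (X ∩ Ioo u (u+h)) ≠ ⊤ := vol_fin hX _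
  have hf2 : volume (Ico (u+h) (v+h)) ≠ ⊤ := by rw [Real.volume_Ico]; exact ENNReal.ofReal_ne_top
  have := ENNReal.toReal_mono (by finiteness) hle
  rw [ENNReal.toReal_add hf1 hf2, Real.volume_Ico, ENNReal.toReal_ofReal (by linarith)] at this
  linarith

lemma lip_abs (hX : X ⊆ Icc (0:ℝ) 1) (u v h : ℝ) :
    |(volume (X ∩ Ioo u (u+h))).toReal - (volume (X ∩ Ioo v (v+h))).toReal| ≤ |u - v| := by
  rcases le_total u v with hc | hc
  · rw [abs_of_nonpos (by linarith : u - v ≤ 0)]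
    exact abs_le.mpr ⟨by linarith [lip2 hX (h := h) hc], by linarith [lip1 hX (h := h) hc]⟩
  · rw [abs_of_nonneg (by linarith : 0 ≤ u - v)]
    exact abs_le.mpr ⟨by linarith [lip1 hX (h := h) hc], by linarith [lip2 hX (h := h) hc]⟩

lemma exists_small_pow (hN : 2 ≤ N) {m : ℝ} (hm : 0 < m) :
    ∃ s : ℕ, 1 ≤ s ∧ 1/(N:ℝ)^s < m := by
  obtain ⟨n, hn⟩ := pow_unbounded_of_one_lt (1/m) (hR1 hN)
  refine ⟨n+1, by omega, ?_⟩
  have h1 : 1/(N:ℝ)^n < m := by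
    rw [div_lt_iff₀ (hpow_pos hN n)] at *
    rw [div_lt_iff₀ hm] at hn
    linarith
  exact lt_trans (inv_pow_succ_lt hN n) h1

lemma indep_aux (hN : 2 ≤ N) (hX : X ⊆ Icc (0:ℝ) 1) (hXsat : SNSaturated N X)
    {a b h : ℝ} (hh : 0 ≤ h) (ha : 0 < a) (hab : a ≤ b) (hb1 : b + h < 1) :
    volume (X ∩ Ioo a (a+h)) = volume (X ∩ Ioo b (b+h)) := by
  rw [← ENNReal.toReal_eq_toReal_iff' (vol_fin hX _) (vol_fin hX _)]
  by_contra hne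
  set ga := (volume (X ∩ Ioo a (a+h))).toReal with hga
  set gb := (volume (X ∩ Ioo b (b+h))).toReal with hgb
  have hd : 0 < |ga - gb| := abs_pos.mpr (sub_ne_zero.mpr hne)
  set d := |ga - gb| with hdd
  have hm : 0 < min a (min (1-h-b) (d/2)) := by
    apply lt_min ha (lt_min (by linarith) (by linarith))
  obtain ⟨s, hs1, hs2⟩ := exists_small_pow hN hm
  set δ := ((N:ℝ)-1)/(N:ℝ)^(s+1) with hδ
  have hδ0 : 0 < δ := delta_pos hN s
  have hδlt : δ < 1/(N:ℝ)^s := delta_lt hN s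
  set k := ⌊(b-a)/δ⌋₊ with hk
  have hba : 0 ≤ (b-a)/δ := div_nonneg (by linarith) hδ0.le
  have hk1 : (k:ℝ) * δ ≤ b - a := by
    have := Nat.floor_le hba
    rw [le_div_iff₀ hδ0] at this
    linarith
  have hk2 : b - a < ((k:ℝ)+1) * δ := by
    have := Nat.lt_floor_add_one ((b-a)/δ)
    rw [div_lt_iff₀ hδ0] at this
    linarith
  have hmina : min a (min (1-h-b) (d/2)) ≤ a := min_le_left _ _
  have hminb : min a (min (1-h-b) (d/2)) ≤ 1-h-b := le_trans (min_le_right _ _) (min_le_left _ _)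
  have hmind : min a (min (1-h-b) (d/2)) ≤ d/2 := le_trans (min_le_right _ _) (min_le_right _ _)
  have hchain := chain (u := a) (h := h) hN hs1 hXsat hh k (by linarith)
    (by have : a + k*δ ≤ b := by linarith
        linarith)
  have hlip := lip_abs hX (a + k*δ) b h
  have habs : |a + k*δ - b| ≤ δ := by
    rw [abs_le]
    constructor <;> nlinarith
  have hgeq : ga = (volume (X ∩ Ioo (a + k*δ) (a + k*δ + h))).toReal := by
    rw [hga, hchain]
  rw [← hgeq] at hlip
  have : d ≤ δ := le_trans hlip habs
  have : d < d := by linarith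
  exact lt_irrefl d this

lemma indep_int (hN : 2 ≤ N) (hX : X ⊆ Icc (0:ℝ) 1) (hXsat : SNSaturated N X)
    {a b h : ℝ} (hh : 0 ≤ h) (ha : 0 < a) (hb : 0 < b) (ha1 : a + h < 1) (hb1 : b + h < 1) :
    volume (X ∩ Ioo a (a+h)) = volume (X ∩ Ioo b (b+h)) := by
  rcases le_total a b with hc | hc
  · exact indep_aux hN hX hXsat hh ha hc hb1
  · exact (indep_aux hN hX hXsat hh hb hc ha1).symm

lemma clamp_facts {a h η : ℝ} (ha : 0 ≤ a) (hah : a + h ≤ 1) (hη : 0 < η) (hη2 : η ≤ (1-h)/2) :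
    0 < min (max a η) (1-h-η) ∧ min (max a η) (1-h-η) + h < 1 ∧ |a - min (max a η) (1-h-η)| ≤ η := by
  have h1 : η ≤ 1-h-η := by linarith
  have h2 : η ≤ max a η := le_max_right _ _
  refine ⟨lt_of_lt_of_le hη (le_min h2 h1), by
      have : min (max a η) (1-h-η) ≤ 1-h-η := min_le_right _ _
      linarith, ?_⟩
  rcases le_total a η with hc | hc
  · rw [max_eq_right hc, min_eq_left h1, abs_le]
    constructor <;> linarith
  · rw [max_eq_left hc]
    rcases le_total a (1-h-η) with hc2 | hc2
    · rw [min_eq_left hc2]; simp [abs_of_nonneg, hη.le]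
    · rw [min_eq_right hc2, abs_le]
      constructor <;> linarith

lemma indep (hN : 2 ≤ N) (hX : X ⊆ Icc (0:ℝ) 1) (hXsat : SNSaturated N X)
    {a b h : ℝ} (hh : 0 ≤ h) (ha : 0 ≤ a) (hb : 0 ≤ b) (ha1 : a + h ≤ 1) (hb1 : b + h ≤ 1) :
    volume (X ∩ Ioo a (a+h)) = volume (X ∩ Ioo b (b+h)) := by
  rcases lt_or_ge h 1 with hlt | hge
  swap
  · have hae : a = 0 := by linarith
    have hbe : b = 0 := by linarith
    rw [hae, hbe]
  rw [← ENNReal.toReal_eq_toReal_iff' (vol_fin hX _) (vol_fin hX _)]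
  by_contra hne
  set ga := (volume (X ∩ Ioo a (a+h))).toReal with hga
  set gb := (volume (X ∩ Ioo b (b+h))).toReal with hgb
  have hd : 0 < |ga - gb| := abs_pos.mpr (sub_ne_zero.mpr hne)
  set d := |ga - gb| with hdd
  set η := min ((1-h)/2) (d/5) with hη
  have hη0 : 0 < η := lt_min (by linarith) (by linarith)
  have hη2 : η ≤ (1-h)/2 := min_le_left _ _
  have hη5 : η ≤ d/5 := min_le_right _ _
  obtain ⟨hA1, hA2, hA3⟩ := clamp_facts ha ha1 hη0 hη2
  obtain ⟨hB1, hB2, hB3⟩ := clamp_facts hb hb1 hη0 hη2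
  set a' := min (max a η) (1-h-η) with ha'
  set b' := min (max b η) (1-h-η) with hb'
  have heq := indep_int hN hX hXsat hh hA1 hB1 hA2 hB2
  have hlipa := lip_abs hX a a' h
  have hlipb := lip_abs hX b' b h
  have heqR : (volume (X ∩ Ioo a' (a'+h))).toReal = (volume (X ∩ Ioo b' (b'+h))).toReal := by
    rw [heq]
  have habs' : |b' - b| ≤ η := by rw [abs_sub_comm]; exact hB3
  have : d ≤ 2*η := by
    have t1 : |ga - (volume (X ∩ Ioo a' (a'+h))).toReal| ≤ η := le_trans hlipa hA3
    have t2 : |(volume (X ∩ Ioo b' (b'+h))).toReal - gb| ≤ η := le_trans hlipb habs'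
    calc d = |ga - gb| := rfl
    _ ≤ |ga - (volume (X ∩ Ioo a' (a'+h))).toReal| + |(volume (X ∩ Ioo a' (a'+h))).toReal - gb| := abs_sub_le _ _ _
    _ = |ga - (volume (X ∩ Ioo a' (a'+h))).toReal| + |(volume (X ∩ Ioo b' (b'+h))).toReal - gb| := by rw [heqR]
    _ ≤ η + η := add_le_add t1 t2
    _ = 2*η := by ring
  linarith


lemma pair_null (x y : ℝ) : volume ({x, y} : Set ℝ) = 0 := by
  refine le_antisymm (le_trans (measure_union_le {x} {y}) ?_) (zero_le)
  simp

lemma add3 (hXmeas : MeasurableSet X) {a b c : ℝ} (hab : a ≤ b) (hbc : b ≤ c) :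
    volume (X ∩ Ioo a c) = volume (X ∩ Ioo a b) + volume (X ∩ Ioo b c) := by
  have hd : Ioo a c \ {b} = Ioo a b ∪ Ioo b c := by
    ext x
    simp only [mem_diff, mem_Ioo, mem_singleton_iff, mem_union]
    constructor
    · rintro ⟨⟨h1, h2⟩, h3⟩
      rcases lt_or_gt_of_ne h3 with hc | hc
      · exact Or.inl ⟨h1, hc⟩
      · exact Or.inr ⟨hc, h2⟩
    · rintro (⟨h1, h2⟩ | ⟨h1, h2⟩)
      · exact ⟨⟨h1, lt_of_lt_of_le h2 hbc⟩, ne_of_lt h2⟩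
      · exact ⟨⟨lt_of_le_of_lt hab h1, h2⟩, ne_of_gt h1⟩
  have h1 : volume ((X ∩ Ioo a c) \ {b}) = volume (X ∩ Ioo a c) :=
    measure_diff_null (measure_singleton b)
  have h2 : (X ∩ Ioo a c) \ {b} = (X ∩ Ioo a b) ∪ (X ∩ Ioo b c) := by
    rw [diff_eq, inter_assoc, ← diff_eq, hd, inter_union_distrib_left]
  have hdisj : Disjoint (X ∩ Ioo a b) (X ∩ Ioo b c) := by
    rw [disjoint_left]
    rintro x ⟨_, _, hx2⟩ ⟨_, hx3, _⟩
    linarith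
  rw [← h1, h2, measure_union hdisj (hXmeas.inter measurableSet_Ioo)]

lemma grid (hN : 2 ≤ N) (hX : X ⊆ Icc (0:ℝ) 1) (hXmeas : MeasurableSet X)
    (hXsat : SNSaturated N X) {M : ℕ} (hM : 1 ≤ M) :
    ∀ j ≤ M, volume (X ∩ Ioo 0 ((j:ℝ)/M)) = j * volume (X ∩ Ioo 0 (1/(M:ℝ))) := by
  have hM0 : (0:ℝ) < M := by exact_mod_cast hM
  intro j
  induction j with
  | zero => simp
  | succ j ih =>
    intro hj
    have hj' : j ≤ M := by omega
    have hjM : (0:ℝ) ≤ (j:ℝ)/M := by positivity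
    have hj1 : (j:ℝ)/M ≤ ((j:ℝ)+1)/M := by gcongr; linarith
    have e1 := add3 (a := 0) (b := (j:ℝ)/M) (c := ((j:ℝ)+1)/M) hXmeas hjM hj1
    have h3 : (j:ℝ)/M + 1/M = ((j:ℝ)+1)/M := by ring
    have hjMle : ((j:ℝ)+1) ≤ (M:ℝ) := by exact_mod_cast hj
    have hcond1 : (j:ℝ)/M + 1/M ≤ 1 := by
      rw [h3, div_le_one hM0]; linarith
    have hcond2 : (0:ℝ) + 1/M ≤ 1 := by
      rw [zero_add, div_le_one hM0]; exact_mod_cast hM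
    have e2 := indep (a := (j:ℝ)/M) (b := 0) (h := 1/(M:ℝ)) hN hX hXsat (by positivity)
      hjM le_rfl hcond1 hcond2
    rw [zero_add, h3] at e2
    have e4 : volume (X ∩ Ioo 0 (((j:ℝ)+1)/M)) =
        ((j:ℕ):ℝ≥0∞) * volume (X ∩ Ioo 0 (1/(M:ℝ))) + volume (X ∩ Ioo 0 (1/(M:ℝ))) := by
      rw [e1, ih hj', e2]
    push_cast
    rw [e4]
    ring

lemma vol_X_Ioo (hX : X ⊆ Icc (0:ℝ) 1) : volume (X ∩ Ioo 0 1) = volume X := by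
  refine le_antisymm (measure_mono inter_subset_left) ?_
  have hsub : X ⊆ (X ∩ Ioo 0 1) ∪ {0, 1} := by
    intro x hx
    obtain ⟨h0, h1⟩ := hX hx
    rcases eq_or_lt_of_le h0 with hc | hc
    · exact Or.inr (Or.inl hc.symm)
    rcases eq_or_lt_of_le h1 with hc' | hc'
    · exact Or.inr (Or.inr hc')
    exact Or.inl ⟨hx, hc, hc'⟩
  calc volume X ≤ volume (X ∩ Ioo 0 1) + volume ({0,1} : Set ℝ) :=
        le_trans (measure_mono hsub) (measure_union_le _ _)
  _ = volume (X ∩ Ioo 0 1) := by rw [pair_null]; ring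

lemma toReal_le_one (hX : X ⊆ Icc (0:ℝ) 1) : (volume X).toReal ≤ 1 := by
  have := ENNReal.toReal_mono ENNReal.one_ne_top (vol_le_one hX)
  simpa using this

lemma h_formula (hN : 2 ≤ N) (hX : X ⊆ Icc (0:ℝ) 1) (hXmeas : MeasurableSet X)
    (hXsat : SNSaturated N X) {h : ℝ} (h0 : 0 ≤ h) (h1 : h ≤ 1) :
    volume (X ∩ Ioo 0 h) = volume X * ENNReal.ofReal h := by
  have hXfin : volume X ≠ ⊤ := ne_top_of_le_ne_top ENNReal.one_ne_top (vol_le_one hX)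
  set c := (volume X).toReal with hc
  have hc1 : c ≤ 1 := toReal_le_one hX
  have hc0 : 0 ≤ c := ENNReal.toReal_nonneg
  set gh := (volume (X ∩ Ioo 0 h)).toReal with hgh
  have key : ∀ M : ℕ, 1 ≤ M → |gh - h * c| ≤ 1/M := by
    intro M hM
    have hM0 : (0:ℝ) < M := by exact_mod_cast hM
    set e := volume (X ∩ Ioo 0 (1/(M:ℝ))) with he
    have hefin : e ≠ ⊤ := vol_fin hX _
    have hgridM := grid hN hX hXmeas hXsat hM M le_rfl
    rw [div_self (ne_of_gt hM0), vol_X_Ioo hX] at hgridM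
    have heR : (M:ℝ) * e.toReal = c := by
      rw [hc, hgridM, ENNReal.toReal_mul, ENNReal.toReal_natCast]
    have heR2 : e.toReal = c / M := by field_simp at heR ⊢; linarith
    set j := ⌊h * M⌋₊ with hj
    have hjle : (j:ℝ) ≤ h * M := Nat.floor_le (by positivity)
    have hjlt : h * M < (j:ℝ) + 1 := Nat.lt_floor_add_one _
    have hjM : j ≤ M := by
      have hhM : h * M ≤ (M:ℝ) := by nlinarith
      calc j = ⌊h * M⌋₊ := rfl
      _ ≤ ⌊(M:ℝ)⌋₊ := Nat.floor_mono hhM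
      _ = M := Nat.floor_natCast M
    rcases eq_or_lt_of_le hjM with hjeq | hjlt'
    · -- j = M forces h = 1
      have hh1 : (1:ℝ) ≤ h := by
        rw [hjeq] at hjle
        nlinarith
      have hhe : h = 1 := le_antisymm h1 hh1
      rw [hgh, hhe, vol_X_Ioo hX]
      simp only [one_mul, ← hc, sub_self, abs_zero]
      positivity
    · -- j < M
      have hj1M : j + 1 ≤ M := hjlt'
      have hjh : (j:ℝ)/M ≤ h := by rw [div_le_iff₀ hM0]; exact hjle
      have hhj1 : h ≤ ((j:ℝ)+1)/M := by rw [le_div_iff₀ hM0]; linarith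
      have hlow : ((j:ℕ):ℝ≥0∞) * e ≤ volume (X ∩ Ioo 0 h) := by
        rw [← grid hN hX hXmeas hXsat hM j hjM]
        exact measure_mono (inter_subset_inter_right _ (Ioo_subset_Ioo le_rfl hjh))
      have hhigh : volume (X ∩ Ioo 0 h) ≤ (((j+1):ℕ):ℝ≥0∞) * e := by
        rw [← grid hN hX hXmeas hXsat hM (j+1) hj1M]
        refine measure_mono (inter_subset_inter_right _ (Ioo_subset_Ioo le_rfl ?_))
        push_cast
        exact hhj1
      have hlowR : (j:ℝ) * e.toReal ≤ gh := by
        have := ENNReal.toReal_mono (vol_fin hX _) hlow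
        rwa [ENNReal.toReal_mul, ENNReal.toReal_natCast] at this
      have hhighR : gh ≤ ((j:ℝ)+1) * e.toReal := by
        have hfin : (((j+1):ℕ):ℝ≥0∞) * e ≠ ⊤ := by finiteness
        have := ENNReal.toReal_mono hfin hhigh
        rw [ENNReal.toReal_mul, ENNReal.toReal_natCast] at this
        push_cast at this
        linarith
      rw [heR2] at hlowR hhighR
      have h3 : c/M ≤ 1/M := by gcongr
      have hid1 : ((j:ℝ)+1)/M*c = ((j:ℝ)+1)*(c/M) := by ring
      have hid2 : (j:ℝ)/M*c = (j:ℝ)*(c/M) := by ring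
      have hub : h*c ≤ ((j:ℝ)+1)/M*c := mul_le_mul_of_nonneg_right hhj1 hc0
      have hlb : (j:ℝ)/M*c ≤ h*c := mul_le_mul_of_nonneg_right hjh hc0
      rw [abs_le]
      exact ⟨by linarith, by linarith⟩
  have hreal : gh = h * c := by
    by_contra hne
    have hd : 0 < |gh - h*c| := abs_pos.mpr (sub_ne_zero.mpr hne)
    obtain ⟨M, hMgt⟩ := exists_nat_gt (1/|gh - h*c|)
    have hM1 : 1 ≤ M := by
      by_contra hM1
      push_neg at hM1
      interval_cases M
      have hpos : 0 < 1/|gh - h*c| := by positivity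
      norm_num at hMgt
      linarith
    have hk := key M hM1
    have hMpos : (0:ℝ) < M := by exact_mod_cast hM1
    have hlt : 1/(M:ℝ) < |gh - h*c| := by
      rw [div_lt_iff₀ hMpos]
      rw [div_lt_iff₀ hd] at hMgt
      linarith
    linarith
  refine (ENNReal.toReal_eq_toReal_iff' (vol_fin hX _) ?_).mp ?_
  · exact ENNReal.mul_ne_top hXfin ENNReal.ofReal_ne_top
  · rw [ENNReal.toReal_mul, ENNReal.toReal_ofReal h0, ← hc, ← hgh, hreal]; ring

lemma interval_formula (hN : 2 ≤ N) (hX : X ⊆ Icc (0:ℝ) 1) (hXmeas : MeasurableSet X)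
    (hXsat : SNSaturated N X) {a b : ℝ} (h0 : 0 ≤ a) (hab : a ≤ b) (hb : b ≤ 1) :
    volume (X ∩ Ioo a b) = volume X * ENNReal.ofReal (b - a) := by
  have hI : Ioo a b = Ioo a (a + (b - a)) := by rw [show a + (b-a) = b by ring]
  have e1 := indep (a := a) (b := 0) (h := b - a) hN hX hXsat (by linarith) h0 le_rfl
    (by linarith) (by linarith)
  rw [zero_add] at e1
  rw [hI, e1]
  exact h_formula hN hX hXmeas hXsat (by linarith) (by linarith)


theorem main (hN : 2 ≤ N) (hX : X ⊆ Set.Icc (0:ℝ) 1)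
    (hXmeas : MeasurableSet X) (hXsat : SNSaturated N X) :
    volume X = 0 ∨ volume X = 1 := by
  have hXfin : volume X ≠ ⊤ := ne_top_of_le_ne_top ENNReal.one_ne_top (vol_le_one hX)
  set μ := volume.restrict X with hμ
  set ν := volume X • volume.restrict (Icc (0:ℝ) 1) with hν
  haveI hfinμ : IsFiniteMeasure μ := by
    constructor
    rw [hμ, Measure.restrict_apply_univ]
    exact lt_of_le_of_lt (vol_le_one hX) ENNReal.one_lt_top
  have key : ∀ ⦃a b : ℝ⦄, a < b → μ (Ico a b) = ν (Ico a b) := by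
    intro a b hab
    set a' := max a 0 with ha'
    set b' := min b 1 with hb'
    have ha'0 : 0 ≤ a' := le_max_right _ _
    have hb'1 : b' ≤ 1 := min_le_right _ _
    have haa' : a ≤ a' := le_max_left _ _
    have hb'b : b' ≤ b := min_le_left _ _
    have hsub1 : Ico a b ∩ X ⊆ (X ∩ Ioo a' b') ∪ {a', b'} := by
      rintro x ⟨⟨hax, hxb⟩, hxX⟩
      obtain ⟨h0x, hx1⟩ := hX hxX
      have h1 : a' ≤ x := max_le hax h0x
      have h2 : x ≤ b' := le_min (le_of_lt hxb) hx1
      rcases eq_or_lt_of_le h1 with hc | hc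
      · exact Or.inr (Or.inl hc.symm)
      rcases eq_or_lt_of_le h2 with hc' | hc'
      · exact Or.inr (Or.inr hc')
      exact Or.inl ⟨hxX, hc, hc'⟩
    have hsub2 : X ∩ Ioo a' b' ⊆ Ico a b ∩ X := by
      rintro x ⟨hxX, hx1, hx2⟩
      exact ⟨⟨le_of_lt (lt_of_le_of_lt haa' hx1), lt_of_lt_of_le hx2 hb'b⟩, hxX⟩
    have hXeq : volume (Ico a b ∩ X) = volume (X ∩ Ioo a' b') := by
      refine le_antisymm ?_ (measure_mono hsub2)
      calc volume (Ico a b ∩ X) ≤ volume (X ∩ Ioo a' b') + volume ({a',b'} : Set ℝ) :=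
            le_trans (measure_mono hsub1) (measure_union_le _ _)
      _ = volume (X ∩ Ioo a' b') := by rw [pair_null]; ring
    have hsub3 : Ico a b ∩ Icc 0 1 ⊆ Ioo a' b' ∪ {a', b'} := by
      rintro x ⟨⟨hax, hxb⟩, h0x, hx1⟩
      have h1 : a' ≤ x := max_le hax h0x
      have h2 : x ≤ b' := le_min (le_of_lt hxb) hx1
      rcases eq_or_lt_of_le h1 with hc | hc
      · exact Or.inr (Or.inl hc.symm)
      rcases eq_or_lt_of_le h2 with hc' | hc'
      · exact Or.inr (Or.inr hc')
      exact Or.inl ⟨hc, hc'⟩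
    have hsub4 : Ioo a' b' ⊆ Ico a b ∩ Icc 0 1 := by
      rintro x ⟨hx1, hx2⟩
      exact ⟨⟨le_of_lt (lt_of_le_of_lt haa' hx1), lt_of_lt_of_le hx2 hb'b⟩,
        le_of_lt (lt_of_le_of_lt ha'0 hx1), le_of_lt (lt_of_lt_of_le hx2 hb'1)⟩
    have hIeq : volume (Ico a b ∩ Icc 0 1) = volume (Ioo a' b') := by
      refine le_antisymm ?_ (measure_mono hsub4)
      calc volume (Ico a b ∩ Icc 0 1) ≤ volume (Ioo a' b') + volume ({a',b'} : Set ℝ) :=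
            le_trans (measure_mono hsub3) (measure_union_le _ _)
      _ = volume (Ioo a' b') := by rw [pair_null]; ring
    have hμ1 : μ (Ico a b) = volume (X ∩ Ioo a' b') := by
      rw [hμ, Measure.restrict_apply measurableSet_Ico, hXeq]
    have hν1 : ν (Ico a b) = volume X * volume (Ioo a' b') := by
      rw [hν, Measure.smul_apply, smul_eq_mul, Measure.restrict_apply measurableSet_Ico, hIeq]
    rw [hμ1, hν1, Real.volume_Ioo]
    rcases le_or_gt a' b' with hc | hc
    · exact interval_formula hN hX hXmeas hXsat ha'0 hc hb'1
    · have hz : ENNReal.ofReal (b' - a') = 0 := ENNReal.ofReal_eq_zero.mpr (by linarith)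
      rw [hz, mul_zero, Ioo_eq_empty (not_lt.mpr hc.le)]
      simp
  have hext : μ = ν := Measure.ext_of_Ico μ ν key
  have h1 : μ X = volume X := by rw [hμ, Measure.restrict_apply hXmeas, inter_self]
  have h2 : ν X = volume X * volume X := by
    rw [hν, Measure.smul_apply, smul_eq_mul, Measure.restrict_apply hXmeas,
      inter_eq_left.mpr hX]
  have heq : volume X = volume X * volume X := by
    conv_lhs => rw [← h1]
    rw [hext, h2]
  rcases eq_or_ne (volume X) 0 with hz | hz
  · exact Or.inl hz
  · right
    have h3 : volume X * 1 = volume X * volume X := by rw [mul_one]; exact heq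
    exact ((ENNReal.mul_right_inj hz hXfin).mp h3).symm

end Meas

end S10

/-- The relation `S_N` is ergodic for Lebesgue measure: every Borel
`S_N`-saturated subset of `[0,1]` has measure `0` or `1`. -/
theorem statement10 (N : ℕ) (hN : 2 ≤ N) (X : Set ℝ) (hX : X ⊆ Set.Icc (0 : ℝ) 1)
    (hXmeas : MeasurableSet X) (hXsat : SNSaturated N X) :
    MeasureTheory.volume X = 0 ∨ MeasureTheory.volume X = 1 := by
  exact S10.main hN hX hXmeas hXsat
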